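/- Let $u, v, w \in \mathbb{R}^7$ be orthonormal with $\varphi_0(u,v,w) = 0$, and set $R = \chi(u,v,w)$. Then the seven vectors $\{u, v, w, R, u \times v, v \times w, w \times u\}$ form an orthonormal basis of $\mathbb{R}^7$. -/

import Mathlib

noncomputable section
open scoped RealInnerProductSpace

abbrev R7 : Type := EuclideanSpace ℝ (Fin 7)

/-- standard basis vector -/
def e (k : Fin 7) : R7 := EuclideanSpace.single k 1

/-- `e^{ijk}(u,v,w)` -/
def tri (i j k : Fin 7) (u v w : R7) : ℝ :=
  Matrix.det !![u i, u j, u k; v i, v j, v k; w i, w j, w k]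

/-- the standard `G₂` 3-form `φ₀` (indices shifted to 0-based) -/
def phi0 (u v w : R7) : ℝ :=
  tri 0 1 2 u v w + tri 0 3 4 u v w + tri 0 5 6 u v w + tri 1 3 5 u v w
    - tri 1 4 6 u v w - tri 2 3 6 u v w - tri 2 4 5 u v w

/-- `e^{ijkl}(u,v,w,z)` -/
def quad (i j k l : Fin 7) (u v w z : R7) : ℝ :=
  Matrix.det !![u i, u j, u k, u l; v i, v j, v k, v l;
    w i, w j, w k, w l; z i, z j, z k, z l]

/-- the 4-form `⋆φ₀` -/
def starphi0 (u v w z : R7) : ℝ :=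
  quad 3 4 5 6 u v w z + quad 1 2 5 6 u v w z + quad 1 2 3 4 u v w z
    + quad 0 2 4 6 u v w z - quad 0 2 3 5 u v w z - quad 0 1 4 5 u v w z
    - quad 0 1 3 6 u v w z

/-- the cross product: `⟪u × v, w⟫ = φ₀(u,v,w)` -/
def cross (u v : R7) : R7 :=
  (WithLp.equiv 2 (Fin 7 → ℝ)).symm fun k => phi0 u v (e k)

/-- the associator `χ`: `⟪χ(u,v,w), z⟫ = ⋆φ₀(u,v,w,z)` -/
def chi (u v w : R7) : R7 :=
  (WithLp.equiv 2 (Fin 7 → ℝ)).symm fun k => starphi0 u v w (e k)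

/-- the coassociator `σ` -/
def sigma (a b c d : R7) : R7 :=
  ⟪b, cross c d⟫ • a + ⟪c, cross a d⟫ • b + ⟪a, cross b d⟫ • c + ⟪b, cross a c⟫ • d

/-- Gram determinant `|u ∧ v ∧ w|²` -/
def gram3 (u v w : R7) : ℝ :=
  Matrix.det !![⟪u,u⟫, ⟪u,v⟫, ⟪u,w⟫; ⟪v,u⟫, ⟪v,v⟫, ⟪v,w⟫; ⟪w,u⟫, ⟪w,v⟫, ⟪w,w⟫]

/-- Gram determinant `|u ∧ v ∧ w ∧ z|²` -/
def gram4 (u v w z : R7) : ℝ :=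
  Matrix.det !![⟪u,u⟫, ⟪u,v⟫, ⟪u,w⟫, ⟪u,z⟫;
    ⟪v,u⟫, ⟪v,v⟫, ⟪v,w⟫, ⟪v,z⟫;
    ⟪w,u⟫, ⟪w,v⟫, ⟪w,w⟫, ⟪w,z⟫;
    ⟪z,u⟫, ⟪z,v⟫, ⟪z,w⟫, ⟪z,z⟫]



-- ===== auxiliary lemmas =====

set_option maxHeartbeats 1000000
set_option maxRecDepth 16000

lemma crossApply (a b : R7) (k : Fin 7) : cross a b k = phi0 a b (e k) := rfl

lemma chiApply (a b c : R7) (k : Fin 7) : chi a b c k = starphi0 a b c (e k) := rfl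

lemma inner_eq (x y : R7) : ⟪x, y⟫ = ∑ i, x i * y i := by
  simp [PiLp.inner_apply, RCLike.inner_apply]
  exact Finset.sum_congr rfl (fun i _ => mul_comm _ _)

lemma detFour (A : Matrix (Fin 4) (Fin 4) ℝ) : A.det = A 0 0*A 1 1*A 2 2*A 3 3 - A 0 0*A 1 1*A 2 3*A 3 2 - A 0 0*A 1 2*A 2 1*A 3 3 + A 0 0*A 1 2*A 2 3*A 3 1 + A 0 0*A 1 3*A 2 1*A 3 2 - A 0 0*A 1 3*A 2 2*A 3 1 - A 0 1*A 1 0*A 2 2*A 3 3 + A 0 1*A 1 0*A 2 3*A 3 2 + A 0 1*A 1 2*A 2 0*A 3 3 - A 0 1*A 1 2*A 2 3*A 3 0 - A 0 1*A 1 3*A 2 0*A 3 2 + A 0 1*A 1 3*A 2 2*A 3 0 + A 0 2*A 1 0*A 2 1*A 3 3 - A 0 2*A 1 0*A 2 3*A 3 1 - A 0 2*A 1 1*A 2 0*A 3 3 + A 0 2*A 1 1*A 2 3*A 3 0 + A 0 2*A 1 3*A 2 0*A 3 1 - A 0 2*A 1 3*A 2 1*A 3 0 - A 0 3*A 1 0*A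 2 1*A 3 2 + A 0 3*A 1 0*A 2 2*A 3 1 + A 0 3*A 1 1*A 2 0*A 3 2 - A 0 3*A 1 1*A 2 2*A 3 0 - A 0 3*A 1 2*A 2 0*A 3 1 + A 0 3*A 1 2*A 2 1*A 3 0 := by
  simp [Matrix.det_succ_row_zero, Fin.sum_univ_succ, Matrix.det_fin_three, Fin.succAbove]
  ring

lemma cross_c0 (a b : R7) : cross a b 0 = a 1*b 2 - a 2*b 1 + a 3*b 4 - a 4*b 3 + a 5*b 6 - a 6*b 5 := by
  simp [crossApply, phi0, tri, Matrix.det_fin_three, e, EuclideanSpace.single_apply]; ring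

lemma cross_c1 (a b : R7) : cross a b 1 = - a 0*b 2 + a 2*b 0 + a 3*b 5 - a 4*b 6 - a 5*b 3 + a 6*b 4 := by
  simp [crossApply, phi0, tri, Matrix.det_fin_three, e, EuclideanSpace.single_apply]; ring

lemma cross_c2 (a b : R7) : cross a b 2 = a 0*b 1 - a 1*b 0 - a 3*b 6 - a 4*b 5 + a 5*b 4 + a 6*b 3 := by
  simp [crossApply, phi0, tri, Matrix.det_fin_three, e, EuclideanSpace.single_apply]; ring

lemma cross_c3 (a b : R7) : cross a b 3 = - a 0*b 4 - a 1*b 5 + a 2*b 6 + a 4*b 0 + a 5*b 1 - a 6*b 2 := by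
  simp [crossApply, phi0, tri, Matrix.det_fin_three, e, EuclideanSpace.single_apply]; ring

lemma cross_c4 (a b : R7) : cross a b 4 = a 0*b 3 + a 1*b 6 + a 2*b 5 - a 3*b 0 - a 5*b 2 - a 6*b 1 := by
  simp [crossApply, phi0, tri, Matrix.det_fin_three, e, EuclideanSpace.single_apply]; ring

lemma cross_c5 (a b : R7) : cross a b 5 = - a 0*b 6 + a 1*b 3 - a 2*b 4 - a 3*b 1 + a 4*b 2 + a 6*b 0 := by
  simp [crossApply, phi0, tri, Matrix.det_fin_three, e, EuclideanSpace.single_apply]; ring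

lemma cross_c6 (a b : R7) : cross a b 6 = a 0*b 5 - a 1*b 4 - a 2*b 3 + a 3*b 2 + a 4*b 1 - a 5*b 0 := by
  simp [crossApply, phi0, tri, Matrix.det_fin_three, e, EuclideanSpace.single_apply]; ring

lemma chi_c0 (a b c : R7) : chi a b c 0 = a 1*b 3*c 6 + a 1*b 4*c 5 - a 1*b 5*c 4 - a 1*b 6*c 3 + a 2*b 3*c 5 - a 2*b 4*c 6 - a 2*b 5*c 3 + a 2*b 6*c 4 - a 3*b 1*c 6 - a 3*b 2*c 5 + a 3*b 5*c 2 + a 3*b 6*c 1 - a 4*b 1*c 5 + a 4*b 2*c 6 + a 4*b 5*c 1 - a 4*b 6*c 2 + a 5*b 1*c 4 + a 5*b 2*c 3 - a 5*b 3*c 2 - a 5*b 4*c 1 + a 6*b 1*c 3 - a 6*b 2*c 4 - a 6*b 3*c 1 + a 6*b 4*c 2 := by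
  simp [chiApply, starphi0, quad, detFour, e, EuclideanSpace.single_apply]; ring

lemma chi_c1 (a b c : R7) : chi a b c 1 = - a 0*b 3*c 6 - a 0*b 4*c 5 + a 0*b 5*c 4 + a 0*b 6*c 3 - a 2*b 3*c 4 + a 2*b 4*c 3 - a 2*b 5*c 6 + a 2*b 6*c 5 + a 3*b 0*c 6 + a 3*b 2*c 4 - a 3*b 4*c 2 - a 3*b 6*c 0 + a 4*b 0*c 5 - a 4*b 2*c 3 + a 4*b 3*c 2 - a 4*b 5*c 0 - a 5*b 0*c 4 + a 5*b 2*c 6 + a 5*b 4*c 0 - a 5*b 6*c 2 - a 6*b 0*c 3 - a 6*b 2*c 5 + a 6*b 3*c 0 + a 6*b 5*c 2 := by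
  simp [chiApply, starphi0, quad, detFour, e, EuclideanSpace.single_apply]; ring

lemma chi_c2 (a b c : R7) : chi a b c 2 = - a 0*b 3*c 5 + a 0*b 4*c 6 + a 0*b 5*c 3 - a 0*b 6*c 4 + a 1*b 3*c 4 - a 1*b 4*c 3 + a 1*b 5*c 6 - a 1*b 6*c 5 + a 3*b 0*c 5 - a 3*b 1*c 4 + a 3*b 4*c 1 - a 3*b 5*c 0 - a 4*b 0*c 6 + a 4*b 1*c 3 - a 4*b 3*c 1 + a 4*b 6*c 0 - a 5*b 0*c 3 - a 5*b 1*c 6 + a 5*b 3*c 0 + a 5*b 6*c 1 + a 6*b 0*c 4 + a 6*b 1*c 5 - a 6*b 4*c 0 - a 6*b 5*c 1 := by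
  simp [chiApply, starphi0, quad, detFour, e, EuclideanSpace.single_apply]; ring

lemma chi_c3 (a b c : R7) : chi a b c 3 = a 0*b 1*c 6 + a 0*b 2*c 5 - a 0*b 5*c 2 - a 0*b 6*c 1 - a 1*b 0*c 6 - a 1*b 2*c 4 + a 1*b 4*c 2 + a 1*b 6*c 0 - a 2*b 0*c 5 + a 2*b 1*c 4 - a 2*b 4*c 1 + a 2*b 5*c 0 - a 4*b 1*c 2 + a 4*b 2*c 1 - a 4*b 5*c 6 + a 4*b 6*c 5 + a 5*b 0*c 2 - a 5*b 2*c 0 + a 5*b 4*c 6 - a 5*b 6*c 4 + a 6*b 0*c 1 - a 6*b 1*c 0 - a 6*b 4*c 5 + a 6*b 5*c 4 := by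
  simp [chiApply, starphi0, quad, detFour, e, EuclideanSpace.single_apply]; ring

lemma chi_c4 (a b c : R7) : chi a b c 4 = a 0*b 1*c 5 - a 0*b 2*c 6 - a 0*b 5*c 1 + a 0*b 6*c 2 - a 1*b 0*c 5 + a 1*b 2*c 3 - a 1*b 3*c 2 + a 1*b 5*c 0 + a 2*b 0*c 6 - a 2*b 1*c 3 + a 2*b 3*c 1 - a 2*b 6*c 0 + a 3*b 1*c 2 - a 3*b 2*c 1 + a 3*b 5*c 6 - a 3*b 6*c 5 + a 5*b 0*c 1 - a 5*b 1*c 0 - a 5*b 3*c 6 + a 5*b 6*c 3 - a 6*b 0*c 2 + a 6*b 2*c 0 + a 6*b 3*c 5 - a 6*b 5*c 3 := by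
  simp [chiApply, starphi0, quad, detFour, e, EuclideanSpace.single_apply]; ring

lemma chi_c5 (a b c : R7) : chi a b c 5 = - a 0*b 1*c 4 - a 0*b 2*c 3 + a 0*b 3*c 2 + a 0*b 4*c 1 + a 1*b 0*c 4 - a 1*b 2*c 6 - a 1*b 4*c 0 + a 1*b 6*c 2 + a 2*b 0*c 3 + a 2*b 1*c 6 - a 2*b 3*c 0 - a 2*b 6*c 1 - a 3*b 0*c 2 + a 3*b 2*c 0 - a 3*b 4*c 6 + a 3*b 6*c 4 - a 4*b 0*c 1 + a 4*b 1*c 0 + a 4*b 3*c 6 - a 4*b 6*c 3 - a 6*b 1*c 2 + a 6*b 2*c 1 - a 6*b 3*c 4 + a 6*b 4*c 3 := by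
  simp [chiApply, starphi0, quad, detFour, e, EuclideanSpace.single_apply]; ring

lemma chi_c6 (a b c : R7) : chi a b c 6 = - a 0*b 1*c 3 + a 0*b 2*c 4 + a 0*b 3*c 1 - a 0*b 4*c 2 + a 1*b 0*c 3 + a 1*b 2*c 5 - a 1*b 3*c 0 - a 1*b 5*c 2 - a 2*b 0*c 4 - a 2*b 1*c 5 + a 2*b 4*c 0 + a 2*b 5*c 1 - a 3*b 0*c 1 + a 3*b 1*c 0 + a 3*b 4*c 5 - a 3*b 5*c 4 + a 4*b 0*c 2 - a 4*b 2*c 0 - a 4*b 3*c 5 + a 4*b 5*c 3 + a 5*b 1*c 2 - a 5*b 2*c 1 + a 5*b 3*c 4 - a 5*b 4*c 3 := by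
  simp [chiApply, starphi0, quad, detFour, e, EuclideanSpace.single_apply]; ring

lemma phi0_swap12 (a b c : R7) : phi0 b a c = -phi0 a b c := by
  simp [phi0, tri, Matrix.det_fin_three]; ring

lemma phi0_swap23 (a b c : R7) : phi0 a c b = -phi0 a b c := by
  simp [phi0, tri, Matrix.det_fin_three]; ring

lemma phi0_cyc (a b c : R7) : phi0 b c a = phi0 a b c := by
  simp [phi0, tri, Matrix.det_fin_three]; ring

lemma phi0_aab (a c : R7) : phi0 a a c = 0 := by
  have := phi0_swap12 a a c; linarith

lemma phi0_aba (a b : R7) : phi0 a b a = 0 := by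
  have h := phi0_cyc a a b
  have h2 := phi0_aab a b
  linarith

lemma phi0_abb (a b : R7) : phi0 a b b = 0 := by
  have h := phi0_cyc b a b
  have h2 := phi0_aba b a
  linarith

lemma inner_cross (a b c : R7) : ⟪cross a b, c⟫ = phi0 a b c := by
  simp only [inner_eq, Fin.sum_univ_seven, cross_c0, cross_c1, cross_c2, cross_c3,
    cross_c4, cross_c5, cross_c6]
  simp [phi0, tri, Matrix.det_fin_three]
  ring

lemma inner_cross' (a b c : R7) : ⟪c, cross a b⟫ = phi0 a b c := by
  rw [real_inner_comm]; exact inner_cross a b c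

lemma cross_skew (a b : R7) : cross b a = -cross a b := by
  ext k
  simp only [PiLp.neg_apply]
  exact phi0_swap12 a b (e k)

lemma inner_cross_cross (a b c : R7) :
    ⟪cross a b, cross a c⟫ = ⟪a,a⟫ * ⟪b,c⟫ - ⟪a,b⟫ * ⟪a,c⟫ := by
  simp only [inner_eq, Fin.sum_univ_seven, cross_c0, cross_c1, cross_c2, cross_c3,
    cross_c4, cross_c5, cross_c6]
  ring

lemma chiE0 (a b c : R7) : chi a b c 0 = -(cross a (cross b c) 0) - ⟪a,b⟫ * c 0 + ⟪a,c⟫ * b 0 := by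
  simp only [inner_eq, Fin.sum_univ_seven, chi_c0, cross_c0, cross_c1, cross_c2, cross_c3, cross_c4, cross_c5, cross_c6]
  ring

lemma chiE1 (a b c : R7) : chi a b c 1 = -(cross a (cross b c) 1) - ⟪a,b⟫ * c 1 + ⟪a,c⟫ * b 1 := by
  simp only [inner_eq, Fin.sum_univ_seven, chi_c1, cross_c0, cross_c1, cross_c2, cross_c3, cross_c4, cross_c5, cross_c6]
  ring

lemma chiE2 (a b c : R7) : chi a b c 2 = -(cross a (cross b c) 2) - ⟪a,b⟫ * c 2 + ⟪a,c⟫ * b 2 := by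
  simp only [inner_eq, Fin.sum_univ_seven, chi_c2, cross_c0, cross_c1, cross_c2, cross_c3, cross_c4, cross_c5, cross_c6]
  ring

lemma chiE3 (a b c : R7) : chi a b c 3 = -(cross a (cross b c) 3) - ⟪a,b⟫ * c 3 + ⟪a,c⟫ * b 3 := by
  simp only [inner_eq, Fin.sum_univ_seven, chi_c3, cross_c0, cross_c1, cross_c2, cross_c3, cross_c4, cross_c5, cross_c6]
  ring

lemma chiE4 (a b c : R7) : chi a b c 4 = -(cross a (cross b c) 4) - ⟪a,b⟫ * c 4 + ⟪a,c⟫ * b 4 := by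
  simp only [inner_eq, Fin.sum_univ_seven, chi_c4, cross_c0, cross_c1, cross_c2, cross_c3, cross_c4, cross_c5, cross_c6]
  ring

lemma chiE5 (a b c : R7) : chi a b c 5 = -(cross a (cross b c) 5) - ⟪a,b⟫ * c 5 + ⟪a,c⟫ * b 5 := by
  simp only [inner_eq, Fin.sum_univ_seven, chi_c5, cross_c0, cross_c1, cross_c2, cross_c3, cross_c4, cross_c5, cross_c6]
  ring

lemma chiE6 (a b c : R7) : chi a b c 6 = -(cross a (cross b c) 6) - ⟪a,b⟫ * c 6 + ⟪a,c⟫ * b 6 := by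
  simp only [inner_eq, Fin.sum_univ_seven, chi_c6, cross_c0, cross_c1, cross_c2, cross_c3, cross_c4, cross_c5, cross_c6]
  ring

lemma inner_chi (a b c z : R7) :
    ⟪chi a b c, z⟫ = -⟪cross a (cross b c), z⟫ - ⟪a,b⟫ * ⟪c,z⟫ + ⟪a,c⟫ * ⟪b,z⟫ := by
  simp only [inner_eq, Fin.sum_univ_seven, chiE0, chiE1, chiE2, chiE3, chiE4, chiE5, chiE6]
  ring

lemma chi_eq (a b c : R7) :
    chi a b c = -cross a (cross b c) - ⟪a,b⟫ • c + ⟪a,c⟫ • b := by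
  apply ext_inner_right ℝ
  intro z
  rw [inner_chi]
  simp only [inner_add_left, inner_sub_left, inner_neg_left, real_inner_smul_left]

theorem stmt7 (u v w : R7) (hu : ‖u‖ = 1) (hv : ‖v‖ = 1) (hw : ‖w‖ = 1)
    (huv : ⟪u, v⟫ = 0) (hvw : ⟪v, w⟫ = 0) (huw : ⟪u, w⟫ = 0)
    (hphi : phi0 u v w = 0) :
    Orthonormal ℝ ![u, v, w, chi u v w, cross u v, cross v w, cross w u] ∧
      Submodule.span ℝ
        (Set.range ![u, v, w, chi u v w, cross u v, cross v w, cross w u]) = ⊤ := by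
  have huu : ⟪u,u⟫ = 1 := by rw [real_inner_self_eq_norm_sq, hu]; norm_num
  have hvv : ⟪v,v⟫ = 1 := by rw [real_inner_self_eq_norm_sq, hv]; norm_num
  have hww : ⟪w,w⟫ = 1 := by rw [real_inner_self_eq_norm_sq, hw]; norm_num
  have hvu : ⟪v,u⟫ = 0 := by rw [real_inner_comm]; exact huv
  have hwv : ⟪w,v⟫ = 0 := by rw [real_inner_comm]; exact hvw
  have hwu : ⟪w,u⟫ = 0 := by rw [real_inner_comm]; exact huw
  have hp1 : phi0 v w u = 0 := (phi0_cyc u v w).trans hphi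
  have hp2 : phi0 w u v = 0 := by rw [← phi0_cyc w u v]; exact hphi
  have hR : chi u v w = -cross u (cross v w) := by
    rw [chi_eq u v w, huv, huw]; simp
  -- u,v,w against cross products
  have g04 : ⟪u, cross u v⟫ = 0 := (inner_cross' u v u).trans (phi0_aba u v)
  have g14 : ⟪v, cross u v⟫ = 0 := (inner_cross' u v v).trans (phi0_abb u v)
  have g24 : ⟪w, cross u v⟫ = 0 := (inner_cross' u v w).trans hphi
  have g05 : ⟪u, cross v w⟫ = 0 := (inner_cross' v w u).trans hp1
  have g15 : ⟪v, cross v w⟫ = 0 := (inner_cross' v w v).trans (phi0_aba v w)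
  have g25 : ⟪w, cross v w⟫ = 0 := (inner_cross' v w w).trans (phi0_abb v w)
  have g06 : ⟪u, cross w u⟫ = 0 := (inner_cross' w u u).trans (phi0_abb w u)
  have g16 : ⟪v, cross w u⟫ = 0 := (inner_cross' w u v).trans hp2
  have g26 : ⟪w, cross w u⟫ = 0 := (inner_cross' w u w).trans (phi0_aba w u)
  -- cross products among themselves
  have g44 : ⟪cross u v, cross u v⟫ = 1 := by
    rw [inner_cross_cross, huu, hvv, huv]; norm_num
  have g55 : ⟪cross v w, cross v w⟫ = 1 := by
    rw [inner_cross_cross, hvv, hww, hvw]; norm_num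
  have g66 : ⟪cross w u, cross w u⟫ = 1 := by
    rw [inner_cross_cross, hww, huu, hwu]; norm_num
  have g45 : ⟪cross u v, cross v w⟫ = 0 := by
    rw [cross_skew v u, inner_neg_left, inner_cross_cross, hvu, huw]; norm_num
  have g46 : ⟪cross u v, cross w u⟫ = 0 := by
    rw [cross_skew u w, inner_neg_right, inner_cross_cross, huv, hvw]; norm_num
  have g56 : ⟪cross v w, cross w u⟫ = 0 := by
    rw [cross_skew w v, inner_neg_left, inner_cross_cross, hvu, hwv]; norm_num
  -- chi against u, v, w
  have g03 : ⟪u, chi u v w⟫ = 0 := by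
    rw [real_inner_comm, hR, inner_neg_left, inner_cross, phi0_aba]; norm_num
  have g13 : ⟪v, chi u v w⟫ = 0 := by
    rw [real_inner_comm, hR, inner_neg_left, inner_cross, phi0_swap23, ← inner_cross, g45]
    norm_num
  have hcucw : ⟪cross u w, cross v w⟫ = 0 := by
    rw [cross_skew w u, inner_neg_left, real_inner_comm, g56]; norm_num
  have g23 : ⟪w, chi u v w⟫ = 0 := by
    rw [real_inner_comm, hR, inner_neg_left, inner_cross, phi0_swap23, ← inner_cross, hcucw]
    norm_num
  -- chi against itself and cross products
  have g33 : ⟪chi u v w, chi u v w⟫ = 1 := by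
    rw [hR, inner_neg_neg, inner_cross_cross, huu, g55, g05]; norm_num
  have hBv : ⟪cross v w, v⟫ = 0 := (inner_cross v w v).trans (phi0_aba v w)
  have hBw : ⟪cross v w, w⟫ = 0 := (inner_cross v w w).trans (phi0_abb v w)
  have g34 : ⟪chi u v w, cross u v⟫ = 0 := by
    rw [hR, inner_neg_left, inner_cross_cross, huu, hBv, g05, huv]; norm_num
  have g35 : ⟪chi u v w, cross v w⟫ = 0 := by
    rw [hR, inner_neg_left, inner_cross, phi0_abb]; norm_num
  have g36 : ⟪chi u v w, cross w u⟫ = 0 := by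
    rw [hR, cross_skew u w, inner_neg_left, inner_neg_right, neg_neg,
      inner_cross_cross, huu, hBw, g05, huw]; norm_num
  have hON : Orthonormal ℝ ![u, v, w, chi u v w, cross u v, cross v w, cross w u] := by
    rw [orthonormal_iff_ite]
    intro i j
    fin_cases i <;> fin_cases j
    exacts [huu, huv, huw, g03, g04, g05, g06,
      hvu, hvv, hvw, g13, g14, g15, g16,
      hwu, hwv, hww, g23, g24, g25, g26,
      (real_inner_comm _ _).trans g03, (real_inner_comm _ _).trans g13,
        (real_inner_comm _ _).trans g23, g33, g34, g35, g36,
      (real_inner_comm _ _).trans g04, (real_inner_comm _ _).trans g14,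
        (real_inner_comm _ _).trans g24, (real_inner_comm _ _).trans g34, g44, g45, g46,
      (real_inner_comm _ _).trans g05, (real_inner_comm _ _).trans g15,
        (real_inner_comm _ _).trans g25, (real_inner_comm _ _).trans g35,
        (real_inner_comm _ _).trans g45, g55, g56,
      (real_inner_comm _ _).trans g06, (real_inner_comm _ _).trans g16,
        (real_inner_comm _ _).trans g26, (real_inner_comm _ _).trans g36,
        (real_inner_comm _ _).trans g46, (real_inner_comm _ _).trans g56, g66]
  refine ⟨hON, hON.linearIndependent.span_eq_top_of_card_eq_finrank ?_⟩
  simp [finrank_euclideanSpace_fin]
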